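/- arXiv:1512.06778 — 5 statements merged into one kernel-verified Lean document; each statement's English description precedes it below -/
import Mathlib

section
/- Let R be a Noetherian local ring with maximal ideal 𝔪 and let (h₁,…,h_k) be a regular sequence of elements of 𝔪 such that the ideal (h₁,…,h_k) generated by the sequence is a radical ideal. Then the ideal (h₁,…,h_{k-1}) generated by the truncated sequence is also a radical ideal. -/
set_option maxHeartbeats 1000000

/-- A sequence `h : Fin k → R` is a regular sequence if each `h i` is a non zero divisor
on `R` modulo the ideal generated by the previous elements, and the ideal generated by
the whole sequence is proper. -/
def IsRegSeq {R : Type*} [CommRing R] {k : ℕ} (h : Fin k → R) : Prop :=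
  (∀ i : Fin k, ∀ a : R,
      h i * a ∈ Ideal.span (h '' {j : Fin k | j < i}) →
        a ∈ Ideal.span (h '' {j : Fin k | j < i})) ∧
  Ideal.span (Set.range h) ≠ ⊤


theorem krull_aux {R : Type*} [CommRing R] [IsNoetherianRing R] [IsLocalRing R]
    (J : Ideal R) (a x : R) (hJ : J ≤ IsLocalRing.maximalIdeal R)
    (haM : a ∈ IsLocalRing.maximalIdeal R)
    (key : ∀ m : ℕ, ∃ c : R, x - c * a ^ m ∈ J) : x ∈ J := by
  have hMtop : IsLocalRing.maximalIdeal R ≠ ⊤ :=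
    (IsLocalRing.maximalIdeal.isMaximal R).ne_top
  have hJtop : J ≠ ⊤ := fun hT => hMtop (top_le_iff.mp (hT ▸ hJ))
  have : Nontrivial (R ⧸ J) := Ideal.Quotient.nontrivial_iff.mpr hJtop
  have : IsLocalRing (R ⧸ J) := IsLocalRing.of_surjective' (Ideal.Quotient.mk J)
    Ideal.Quotient.mk_surjective
  have hatop : Ideal.span {Ideal.Quotient.mk J a} ≠ ⊤ := by
    intro hT
    apply hMtop
    rw [Ideal.eq_top_iff_one] at hT ⊢
    rw [Ideal.mem_span_singleton] at hT
    obtain ⟨b, hb⟩ := hT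
    obtain ⟨c, rfl⟩ := Ideal.Quotient.mk_surjective b
    have h1 : (1 : R) - a * c ∈ J := by
      have := Ideal.Quotient.eq.mp hb
      simpa using this
    have : (1 : R) = (1 - a * c) + a * c := by ring
    rw [this]
    exact (IsLocalRing.maximalIdeal R).add_mem (hJ h1) (Ideal.mul_mem_right _ _ haM)
  have hzero : Ideal.Quotient.mk J x = 0 := by
    have hmemi : Ideal.Quotient.mk J x ∈ ⨅ m : ℕ, Ideal.span {Ideal.Quotient.mk J a} ^ m := by
      rw [Ideal.mem_iInf]
      intro m
      obtain ⟨c, hc⟩ := key m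
      have heq : Ideal.Quotient.mk J x = Ideal.Quotient.mk J c * (Ideal.Quotient.mk J a) ^ m := by
        rw [← map_pow, ← map_mul]
        exact Ideal.Quotient.eq.mpr hc
      rw [heq]
      have hp : (Ideal.Quotient.mk J a) ^ m ∈ Ideal.span {Ideal.Quotient.mk J a} ^ m :=
        Ideal.pow_mem_pow (Ideal.mem_span_singleton_self _) m
      exact Ideal.mul_mem_left _ _ hp
    rwa [Ideal.iInf_pow_eq_bot_of_isLocalRing _ hatop, Ideal.mem_bot] at hmemi
  exact (Ideal.Quotient.eq_zero_iff_mem).mp hzero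

/-- Let `R` be a Noetherian local ring and `(h₁, …, h_k)` a regular sequence of elements of
the maximal ideal generating a radical ideal.  Then the ideal generated by the truncated
sequence `(h₁, …, h_{k-1})` is also radical. -/
theorem stmt0 {R : Type*} [CommRing R] [IsNoetherianRing R] [IsLocalRing R]
    {k : ℕ} (h : Fin (k + 1) → R)
    (hmem : ∀ i, h i ∈ IsLocalRing.maximalIdeal R)
    (hreg : IsRegSeq h)
    (hrad : (Ideal.span (Set.range h)).IsRadical) :
    (Ideal.span (Set.range (h ∘ Fin.castSucc))).IsRadical := by
  classical
  set a : R := h (Fin.last k) with ha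
  set J : Ideal R := Ideal.span (Set.range (h ∘ Fin.castSucc)) with hJ
  set I : Ideal R := Ideal.span (Set.range h) with hI
  have hset : h '' {j : Fin (k+1) | j < Fin.last k} = Set.range (h ∘ Fin.castSucc) := by
    ext x
    constructor
    · rintro ⟨j, hj, rfl⟩
      obtain ⟨i, rfl⟩ | rfl := Fin.eq_castSucc_or_eq_last j
      · exact ⟨i, rfl⟩
      · simp at hj
    · rintro ⟨i, rfl⟩
      exact ⟨i.castSucc, Fin.castSucc_lt_last i, rfl⟩
  have hregk : ∀ x : R, a * x ∈ J → x ∈ J := by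
    intro x hx
    have := hreg.1 (Fin.last k) x (by rw [hset]; exact hx)
    rwa [hset] at this
  -- kill arbitrarily many powers of a
  have hregpow : ∀ (t : ℕ) (c : R), c * a ^ t ∈ J → c ∈ J := by
    intro t
    induction t with
    | zero => intro c hc; simpa using hc
    | succ t ih =>
      intro c hc
      apply ih
      apply hregk
      have : a * (c * a ^ t) = c * a ^ (t + 1) := by ring
      rwa [this]
  have hJI : J ≤ I := Ideal.span_mono (by rintro x ⟨i, rfl⟩; exact ⟨_, rfl⟩)
  have haI : a ∈ I := Ideal.subset_span ⟨Fin.last k, rfl⟩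
  have hIJ : ∀ c : R, c ∈ I → ∃ b : R, c - b * a ∈ J := by
    intro c hc
    have : I = J ⊔ Ideal.span {a} := by
      rw [hI, hJ, ← Ideal.span_union]
      congr 1
      ext x
      simp only [Set.mem_range, Set.mem_union, Set.mem_singleton_iff]
      constructor
      · rintro ⟨i, rfl⟩
        obtain ⟨j, rfl⟩ | rfl := Fin.eq_castSucc_or_eq_last i
        · exact Or.inl ⟨j, rfl⟩
        · exact Or.inr rfl
      · rintro (⟨i, rfl⟩ | rfl)
        · exact ⟨i.castSucc, rfl⟩
        · exact ⟨Fin.last k, rfl⟩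
    rw [this, sup_comm, Ideal.mem_span_singleton_sup] at hc
    obtain ⟨b, j, hjJ, hc⟩ := hc
    exact ⟨b, by rw [← hc]; simpa using hjJ⟩
  -- main claim: if x^n ∈ J then for all m, ∃ c, x - c * a ^ m ∈ J
  intro x hx
  obtain ⟨n, hxn⟩ := hx
  have key : ∀ m : ℕ, ∃ c : R, x - c * a ^ m ∈ J := by
    intro m
    induction m with
    | zero => exact ⟨x, by simp⟩
    | succ m ih =>
      obtain ⟨c, hc⟩ := ih
      -- x^n - (c*a^m)^n ∈ J
      have h1 : x ^ n - (c * a ^ m) ^ n ∈ J := by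
        obtain ⟨d, hd⟩ := sub_dvd_pow_sub_pow x (c * a ^ m) n
        rw [hd]
        exact Ideal.mul_mem_right _ _ hc
      have h2 : (c * a ^ m) ^ n ∈ J := by
        have := J.sub_mem hxn h1
        simpa using this
      have h3 : c ^ n ∈ J := by
        apply hregpow (m * n)
        rwa [mul_pow, ← pow_mul] at h2
      have h4 : c ∈ I := hrad ⟨n, hJI h3⟩
      obtain ⟨b, hb⟩ := hIJ c h4
      refine ⟨b, ?_⟩
      have : x - b * a ^ (m + 1) = (x - c * a ^ m) + (c - b * a) * a ^ m := by ring
      rw [this]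
      exact J.add_mem hc (Ideal.mul_mem_right _ _ hb)
  have hJM : J ≤ IsLocalRing.maximalIdeal R := by
    rw [hJ, Ideal.span_le]
    rintro y ⟨i, rfl⟩
    exact hmem _
  exact krull_aux J a x hJM (hmem _) key
end

section
/- Let R be a Noetherian local ring and (h₁,…,h_k) a regular sequence in R. Let p = (p₁,…,p_k) and n = (n₁,…,n_k) be tuples of natural numbers with p_i ≥ n_i ≥ 1 for all i, and let a ∈ R. If h₁^{p₁−n₁}⋯h_k^{p_k−n_k}·a belongs to the ideal (h₁^{p₁},…,h_k^{p_k}), then a belongs to the ideal (h₁^{n₁},…,h_k^{n_k}). -/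
open RingTheory.Sequence

lemma quot_smulreg_iff {R : Type*} [CommRing R] (I : Ideal R) (r : R) :
    IsSMulRegular (R ⧸ (I • ⊤ : Submodule R R)) r ↔ ∀ a : R, r * a ∈ I → a ∈ I := by
  have hI : (I • ⊤ : Submodule R R) = I := by rw [smul_eq_mul, Ideal.mul_top]
  rw [hI]
  constructor
  · intro H a ha
    have h0 : r • (Submodule.Quotient.mk a : R ⧸ (I : Submodule R R)) = r • 0 := by
      rw [smul_zero, ← Submodule.Quotient.mk_smul, smul_eq_mul]
      exact (Submodule.Quotient.mk_eq_zero _).mpr ha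
    have := H h0
    rw [← Submodule.Quotient.mk_eq_zero]
    simpa using this
  · intro H x y hxy
    obtain ⟨a, rfl⟩ := Submodule.Quotient.mk_surjective _ x
    obtain ⟨b, rfl⟩ := Submodule.Quotient.mk_surjective _ y
    simp only [← Submodule.Quotient.mk_smul] at hxy
    rw [Submodule.Quotient.eq]
    have : r * (a - b) ∈ I := by
      rw [← Submodule.Quotient.mk_eq_zero]
      have h2 : (Submodule.Quotient.mk (r • a - r • b) : R ⧸ (I : Submodule R R)) = 0 := by
        rw [Submodule.Quotient.mk_sub, hxy, sub_self]
      simpa [mul_sub, smul_eq_mul] using h2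
    exact H _ this

lemma isRegSeq_wr {R : Type*} [CommRing R] {k : ℕ} {h : Fin k → R} (hreg : IsRegSeq h) :
    IsWeaklyRegular R (List.ofFn h) := by
  rw [isWeaklyRegular_iff]
  intro i hi
  rw [List.length_ofFn] at hi
  have hset : {x | x ∈ (List.ofFn h).take i} = h '' {j : Fin k | j < ⟨i, hi⟩} := by
    ext x
    simp only [Set.mem_setOf_eq, List.mem_take_iff_getElem, List.getElem_ofFn, Set.mem_image]
    constructor
    · rintro ⟨m, hm, rfl⟩
      simp only [List.length_ofFn, lt_min_iff] at hm
      exact ⟨⟨m, hm.2⟩, hm.1, rfl⟩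
    · rintro ⟨j, hj, rfl⟩
      refine ⟨j.1, ?_, by simp⟩
      simp only [List.length_ofFn, lt_min_iff]
      exact ⟨hj, j.2⟩
  have : Ideal.ofList ((List.ofFn h).take i) = Ideal.span (h '' {j : Fin k | j < ⟨i, hi⟩}) := by
    unfold Ideal.ofList; rw [hset]
  rw [this, quot_smulreg_iff]
  simpa using hreg.1 ⟨i, hi⟩

lemma isRegSeq_mem_max {R : Type*} [CommRing R] [IsLocalRing R] {k : ℕ} {h : Fin k → R}
    (hreg : IsRegSeq h) (i : Fin k) : h i ∈ IsLocalRing.maximalIdeal R :=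
  IsLocalRing.le_maximalIdeal hreg.2 (Ideal.subset_span ⟨i, rfl⟩)

/-- Base regularity: `h j` is a nonzerodivisor modulo the span of the values of `h` on a
finset not containing `j`. -/
lemma reg_mod_span {R : Type*} [CommRing R] [IsNoetherianRing R] [IsLocalRing R]
    {k : ℕ} {h : Fin k → R} (hreg : IsRegSeq h) (s : Finset (Fin k)) {j : Fin k} (hj : j ∉ s) :
    ∀ a : R, h j * a ∈ Ideal.span (h '' ↑s) → a ∈ Ideal.span (h '' ↑s) := by
  classical
  set l₀ : List (Fin k) := (List.finRange k).filter (· ∈ s) with hl₀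
  set l₁ : List (Fin k) := (List.finRange k).filter (fun x => !decide (x ∈ s)) with hl₁
  have hjl₁ : j ∈ l₁ := by
    rw [hl₁, List.mem_filter]
    simpa using hj
  have perm : (List.ofFn h).Perm ((l₀ ++ j :: l₁.erase j).map h) := by
    rw [List.ofFn_eq_map]
    refine (List.Perm.map h ?_).symm
    exact (List.Perm.append_left l₀ (List.perm_cons_erase hjl₁).symm).trans
      (List.filter_append_perm _ _)
  have wr : IsWeaklyRegular R ((l₀.map h ++ [h j]) ++ (l₁.erase j).map h) := by
    have hmax : ∀ r ∈ List.ofFn h, r ∈ IsLocalRing.maximalIdeal R := by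
      intro r hr
      rw [List.mem_ofFn] at hr
      obtain ⟨i, rfl⟩ := hr
      exact isRegSeq_mem_max hreg i
    have wr' := IsLocalRing.isWeaklyRegular_of_perm_of_subset_maximalIdeal
      (isRegSeq_wr hreg) perm hmax
    have listeq : (l₀ ++ j :: l₁.erase j).map h
        = (l₀.map h ++ [h j]) ++ (l₁.erase j).map h := by simp
    rwa [listeq] at wr'
  rw [isWeaklyRegular_append_iff, isWeaklyRegular_append_iff,
    isWeaklyRegular_singleton_iff] at wr
  have hI : Ideal.ofList (l₀.map h) = Ideal.span (h '' ↑s) := by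
    unfold Ideal.ofList
    congr 1
    ext x
    simp only [Set.mem_setOf_eq, List.mem_map, Set.mem_image, Finset.mem_coe, hl₀,
      List.mem_filter, List.mem_finRange, true_and, decide_eq_true_eq]
  have := wr.1.2
  rw [hI, quot_smulreg_iff] at this
  exact this

section Aux
variable {R : Type*} [CommRing R] {k : ℕ}

/-- Span of `h i ^ m i` over indices with `m i ≠ 0`. -/
def pspan (h : Fin k → R) (m : Fin k → ℕ) : Ideal R :=
  Ideal.span (Set.range fun i => if m i = 0 then (0 : R) else h i ^ m i)

lemma pspan_eq_sup (h : Fin k → R) (m : Fin k → ℕ) (t : Fin k) (ht : m t ≠ 0) :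
    pspan h m = pspan h (Function.update m t 0) ⊔ Ideal.span {h t ^ m t} := by
  unfold pspan
  apply le_antisymm
  · rw [Ideal.span_le]
    rintro x ⟨i, rfl⟩
    beta_reduce
    by_cases hit : i = t
    · subst hit
      rw [if_neg ht]
      exact Ideal.mem_sup_right (Ideal.subset_span rfl)
    · exact Ideal.mem_sup_left (Ideal.subset_span
        ⟨i, by simp [Function.update_of_ne hit]⟩)
  · apply sup_le
    · rw [Ideal.span_le]
      rintro x ⟨i, rfl⟩
      beta_reduce
      by_cases hit : i = t
      · subst hit; simp
      · exact Ideal.subset_span ⟨i, by simp [Function.update_of_ne hit]⟩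
    · rw [Ideal.span_singleton_le_iff_mem]
      exact Ideal.subset_span ⟨t, by beta_reduce; rw [if_neg ht]⟩

lemma pspan_eq_span (h : Fin k → R) (m : Fin k → ℕ) (hm : ∀ i, m i ≠ 0) :
    pspan h m = Ideal.span (Set.range fun i => h i ^ m i) := by
  have he : (fun i => if m i = 0 then (0 : R) else h i ^ m i) = fun i => h i ^ m i := by
    funext i; rw [if_neg (hm i)]
  unfold pspan
  rw [he]

lemma pspan_eq_image (h : Fin k → R) (m : Fin k → ℕ) (hm : ∀ i, m i ≤ 1) :
    pspan h m = Ideal.span (h '' ↑(Finset.univ.filter (fun i => m i = 1))) := by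
  unfold pspan
  apply le_antisymm
  · rw [Ideal.span_le]
    rintro x ⟨i, rfl⟩
    beta_reduce
    by_cases hi : m i = 0
    · simp [hi]
    · have h1 : m i = 1 := le_antisymm (hm i) (Nat.one_le_iff_ne_zero.mpr hi)
      rw [if_neg hi, h1, pow_one]
      exact Ideal.subset_span ⟨i, by simp [h1], rfl⟩
  · rw [Ideal.span_le]
    rintro x ⟨i, hi, rfl⟩
    simp only [Finset.coe_filter, Set.mem_setOf_eq, Finset.mem_univ, true_and] at hi
    exact Ideal.subset_span ⟨i, by beta_reduce; rw [if_neg (by omega), hi, pow_one]⟩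

end Aux

lemma keyA_base {R : Type*} [CommRing R] [IsNoetherianRing R] [IsLocalRing R]
    {k : ℕ} {h : Fin k → R} (hreg : IsRegSeq h) (m : Fin k → ℕ) (hm : ∀ i, m i ≤ 1)
    {j : Fin k} (hj : m j = 0) :
    ∀ a : R, h j * a ∈ pspan h m → a ∈ pspan h m := by
  classical
  rw [pspan_eq_image h m hm]
  exact reg_mod_span hreg _ (by simp [hj])

/-- Key lemma: `h j` is a nonzerodivisor modulo the ideal generated by powers of the
other elements of the regular sequence. -/
lemma keyA {R : Type*} [CommRing R] [IsNoetherianRing R] [IsLocalRing R]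
    {k : ℕ} {h : Fin k → R} (hreg : IsRegSeq h) (N : ℕ) :
    ∀ (m : Fin k → ℕ) (j : Fin k), (∑ i, m i) ≤ N → m j = 0 →
      ∀ a : R, h j * a ∈ pspan h m → a ∈ pspan h m := by
  induction N with
  | zero =>
    intro m j hsum hj a ha
    refine keyA_base hreg m (fun i => ?_) hj a ha
    have := Finset.single_le_sum (f := m) (fun i _ => Nat.zero_le _) (Finset.mem_univ i)
    omega
  | succ N ih =>
    intro m j hsum hj a ha
    by_cases hsmall : ∀ i, m i ≤ 1
    · exact keyA_base hreg m hsmall hj a ha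
    push_neg at hsmall
    obtain ⟨t, ht2⟩ := hsmall
    have hjt : j ≠ t := by rintro rfl; omega
    have hterase : ∑ i ∈ Finset.univ.erase t, m i + m t = ∑ i, m i :=
      Finset.sum_erase_add _ _ (Finset.mem_univ t)
    have hsum2 : ∀ b : ℕ, ∑ i, Function.update m t b i
        = b + ∑ i ∈ Finset.univ.erase t, m i := by
      intro b
      rw [Finset.erase_eq]
      exact Finset.sum_update_of_mem (Finset.mem_univ t) m b
    have hstep1 : a ∈ pspan h (Function.update m t (m t - 1)) := by
      refine ih _ j (by rw [hsum2]; omega)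
        (by rw [Function.update_of_ne hjt]; exact hj) a ?_
      have hle : pspan h m ≤ pspan h (Function.update m t (m t - 1)) := by
        rw [pspan_eq_sup h m t (by omega),
          pspan_eq_sup h (Function.update m t (m t - 1)) t
            (by rw [Function.update_self]; omega),
          Function.update_idem, Function.update_self]
        exact sup_le_sup_left
          (Ideal.span_singleton_le_span_singleton.mpr (pow_dvd_pow _ (by omega))) _
      exact hle ha
    rw [pspan_eq_sup h (Function.update m t (m t - 1)) t
        (by rw [Function.update_self]; omega),
      Function.update_idem, Function.update_self] at hstep1
    obtain ⟨u, hu, v, hv, hauv⟩ := Submodule.mem_sup.mp hstep1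
    obtain ⟨d, rfl⟩ := Ideal.mem_span_singleton'.mp hv
    rw [pspan_eq_sup h m t (by omega)] at ha
    obtain ⟨w, hw, v', hv', hweq⟩ := Submodule.mem_sup.mp ha
    obtain ⟨c, rfl⟩ := Ideal.mem_span_singleton'.mp hv'
    have hpow : h t ^ (m t - 1) * h t = h t ^ m t := by
      rw [← pow_succ, Nat.sub_add_cancel (by omega)]
    have key1 : h t ^ (m t - 1) * (h j * d - c * h t) ∈ pspan h (Function.update m t 0) := by
      have heq : h t ^ (m t - 1) * (h j * d - c * h t) = w - h j * u := by
        linear_combination h j * hauv - hweq - c * hpow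
      rw [heq]
      exact Submodule.sub_mem _ hw (Ideal.mul_mem_left _ _ hu)
    have hiter : ∀ (e : ℕ) (x : R),
        h t ^ e * x ∈ pspan h (Function.update m t 0) → x ∈ pspan h (Function.update m t 0) := by
      intro e
      induction e with
      | zero => intro x hx; simpa using hx
      | succ e ihe =>
        intro x hx
        have hx' : h t ^ e * (h t * x) ∈ pspan h (Function.update m t 0) := by
          rw [← mul_assoc, ← pow_succ]; exact hx
        exact ih _ t (by rw [hsum2]; omega) (Function.update_self ..) x (ihe _ hx')
    have key2 : h j * d - c * h t ∈ pspan h (Function.update m t 0) := hiter _ _ key1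
    have key3 : h j * d ∈ pspan h (Function.update m t 1) := by
      rw [pspan_eq_sup h (Function.update m t 1) t (by rw [Function.update_self]; omega),
        Function.update_idem, Function.update_self]
      have hsplit : h j * d = (h j * d - c * h t) + c * h t := by ring
      rw [hsplit]
      exact Submodule.add_mem _ (Ideal.mem_sup_left key2)
        (Ideal.mem_sup_right (Ideal.mem_span_singleton'.mpr ⟨c, by rw [pow_one]⟩))
    have key4 : d ∈ pspan h (Function.update m t 1) :=
      ih _ j (by rw [hsum2]; omega)
        (by rw [Function.update_of_ne hjt]; exact hj) d key3
    rw [pspan_eq_sup h (Function.update m t 1) t (by rw [Function.update_self]; omega),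
      Function.update_idem, Function.update_self] at key4
    obtain ⟨e', he', v'', hv'', hd⟩ := Submodule.mem_sup.mp key4
    obtain ⟨f, rfl⟩ := Ideal.mem_span_singleton'.mp hv''
    rw [pspan_eq_sup h m t (by omega)]
    have haeq : a = (u + e' * h t ^ (m t - 1)) + f * h t ^ m t := by
      linear_combination -hauv - h t ^ (m t - 1) * hd + f * hpow
    rw [haeq]
    exact Submodule.add_mem _
      (Ideal.mem_sup_left (Submodule.add_mem _ hu (Ideal.mul_mem_right _ _ he')))
      (Ideal.mem_sup_right (Ideal.mem_span_singleton'.mpr ⟨f, rfl⟩))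

lemma stmt2_aux {R : Type*} [CommRing R] [IsNoetherianRing R] [IsLocalRing R]
    {k : ℕ} {h : Fin k → R} (hreg : IsRegSeq h) (n : Fin k → ℕ) (hn : ∀ i, 1 ≤ n i)
    (N : ℕ) :
    ∀ (p : Fin k → ℕ), (∀ i, n i ≤ p i) → (∑ i, (p i - n i)) ≤ N →
      ∀ a : R, (∏ i, h i ^ (p i - n i)) * a ∈ Ideal.span (Set.range fun i => h i ^ p i) →
        a ∈ Ideal.span (Set.range fun i => h i ^ n i) := by
  induction N with
  | zero =>
    intro p hpn hsum a ha
    have hp : ∀ i, p i = n i := by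
      intro i
      have hle := Finset.single_le_sum (f := fun i => p i - n i)
        (fun i _ => Nat.zero_le _) (Finset.mem_univ i)
      beta_reduce at hle
      have := hpn i
      omega
    have h1 : (∏ i, h i ^ (p i - n i)) = 1 := by
      apply Finset.prod_eq_one
      intro i _
      rw [hp i, Nat.sub_self, pow_zero]
    rw [h1, one_mul] at ha
    have : (fun i => h i ^ p i) = fun i => h i ^ n i := by
      funext i; rw [hp i]
    rwa [this] at ha
  | succ N ih =>
    intro p hpn hsum a ha
    by_cases hept : ∀ i, p i = n i
    · have h1 : (∏ i, h i ^ (p i - n i)) = 1 := by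
        apply Finset.prod_eq_one
        intro i _
        rw [hept i, Nat.sub_self, pow_zero]
      rw [h1, one_mul] at ha
      have : (fun i => h i ^ p i) = fun i => h i ^ n i := by
        funext i; rw [hept i]
      rwa [this] at ha
    push_neg at hept
    obtain ⟨j, hja⟩ := hept
    have hjlt : n j < p j := lt_of_le_of_ne (hpn j) (Ne.symm hja)
    set p' : Fin k → ℕ := Function.update p j (p j - 1) with hp'
    have hp'j : p' j = p j - 1 := Function.update_self ..
    have hp'i : ∀ i, i ≠ j → p' i = p i := fun i hi => Function.update_of_ne hi _ _
    -- rewrite the product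
    have hprodeq : (∏ i, h i ^ (p i - n i))
        = h j * ∏ i, h i ^ (p' i - n i) := by
      have h1 : (fun i => h i ^ (p' i - n i))
          = Function.update (fun i => h i ^ (p i - n i)) j (h j ^ (p j - 1 - n j)) := by
        funext i
        by_cases hij : i = j
        · subst hij; rw [hp'j, Function.update_self]
        · rw [hp'i i hij, Function.update_of_ne hij]
      have h2 : (fun i => h i ^ (p i - n i))
          = Function.update (fun i => h i ^ (p i - n i)) j (h j ^ (p j - n j)) := by
        rw [Function.update_eq_self]
      rw [h2, h1, Finset.prod_update_of_mem (Finset.mem_univ j),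
        Finset.prod_update_of_mem (Finset.mem_univ j), ← mul_assoc, ← pow_succ']
      congr 2
      omega
    have hple : ∀ i, 1 ≤ p i := fun i => le_trans (hn i) (hpn i)
    have hb : h j * ((∏ i, h i ^ (p' i - n i)) * a) ∈ pspan h p := by
      rw [pspan_eq_span h p (fun i => by have := hple i; omega), ← mul_assoc, ← hprodeq]
      exact ha
    rw [pspan_eq_sup h p j (by have := hple j; omega)] at hb
    obtain ⟨w, hw, v, hv, hweq⟩ := Submodule.mem_sup.mp hb
    obtain ⟨c, rfl⟩ := Ideal.mem_span_singleton'.mp hv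
    have hpowj : h j ^ (p j - 1) * h j = h j ^ p j := by
      rw [← pow_succ, Nat.sub_add_cancel (hple j)]
    have hkey : h j * ((∏ i, h i ^ (p' i - n i)) * a - c * h j ^ (p j - 1))
        ∈ pspan h (Function.update p j 0) := by
      have heq : h j * ((∏ i, h i ^ (p' i - n i)) * a - c * h j ^ (p j - 1)) = w := by
        linear_combination -hweq - c * hpowj
      rw [heq]; exact hw
    have hmem := keyA hreg (∑ i, Function.update p j 0 i) (Function.update p j 0) j le_rfl
      (Function.update_self ..) _ hkey
    have hbmem : (∏ i, h i ^ (p' i - n i)) * a ∈ pspan h p' := by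
      have hupd0 : Function.update p' j 0 = Function.update p j 0 := by
        rw [hp', Function.update_idem]
      rw [pspan_eq_sup h p' j (by rw [hp'j]; have := hn j; omega), hupd0, hp'j]
      have hsplit : (∏ i, h i ^ (p' i - n i)) * a
          = ((∏ i, h i ^ (p' i - n i)) * a - c * h j ^ (p j - 1)) + c * h j ^ (p j - 1) := by
        ring
      rw [hsplit]
      exact Submodule.add_mem _ (Ideal.mem_sup_left hmem)
        (Ideal.mem_sup_right (Ideal.mem_span_singleton'.mpr ⟨c, rfl⟩))
    have hp'n : ∀ i, n i ≤ p' i := by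
      intro i
      by_cases hij : i = j
      · subst hij; rw [hp'j]; omega
      · rw [hp'i i hij]; exact hpn i
    refine ih p' hp'n ?_ a ?_
    · have hterase : ∀ (q : Fin k → ℕ),
          ∑ i ∈ Finset.univ.erase j, (q i - n i) + (q j - n j) = ∑ i, (q i - n i) :=
        fun q => Finset.sum_erase_add _ _ (Finset.mem_univ j)
      have e1 := hterase p
      have e2 := hterase p'
      have e3 : ∑ i ∈ Finset.univ.erase j, (p' i - n i)
          = ∑ i ∈ Finset.univ.erase j, (p i - n i) := by
        apply Finset.sum_congr rfl
        intro i hi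
        rw [hp'i i (Finset.ne_of_mem_erase hi)]
      rw [hp'j] at e2
      omega
    · rw [← pspan_eq_span h p' (fun i => by have := hp'n i; have := hn i; omega)]
      exact hbmem

/-- Let `R` be a Noetherian local ring and `(h₁, …, h_k)` a regular sequence in `R`.
Let `p = (p₁, …, p_k)` and `n = (n₁, …, n_k)` be tuples of natural numbers with
`p_i ≥ n_i ≥ 1` for all `i`, and let `a ∈ R`.  If `h₁^{p₁-n₁} ⋯ h_k^{p_k-n_k} · a` belongs
to the ideal `(h₁^{p₁}, …, h_k^{p_k})`, then `a` belongs to `(h₁^{n₁}, …, h_k^{n_k})`. -/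
theorem stmt2 {R : Type*} [CommRing R] [IsNoetherianRing R] [IsLocalRing R]
    {k : ℕ} (h : Fin k → R) (hreg : IsRegSeq h)
    (p n : Fin k → ℕ) (hn : ∀ i, 1 ≤ n i) (hpn : ∀ i, n i ≤ p i) (a : R)
    (ha : (∏ i, h i ^ (p i - n i)) * a ∈ Ideal.span (Set.range fun i => h i ^ p i)) :
    a ∈ Ideal.span (Set.range fun i => h i ^ n i) :=
  stmt2_aux hreg n hn (∑ i, (p i - n i)) p hpn le_rfl a ha
end

section
/- Let R be a Noetherian local ring, (h₁,h₂) a regular sequence in R, and M a free R-module. If m₁, m₂, m₃ ∈ M satisfy h₂²·m₁ + h₁²·m₂ = h₁h₂·m₃, then m₁ ∈ h₁·M and m₂ ∈ h₂·M. -/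
/-- Scalar version: from the relation `h₂² a + h₁² b = h₁ h₂ c` and regularity,
`h₁ ∣ a` and `h₂ ∣ b`. -/
lemma stmt11_scalar {R : Type*} [CommRing R] {h₁ h₂ : R}
    (hA : ∀ x : R, h₁ * x = 0 → x = 0) (hB : ∀ x : R, h₁ ∣ h₂ * x → h₁ ∣ x)
    (a b c : R) (hrel : h₂ ^ 2 * a + h₁ ^ 2 * b = h₁ * h₂ * c) :
    h₁ ∣ a ∧ h₂ ∣ b := by
  have h1 : h₁ ∣ h₂ * (h₂ * a) := ⟨h₂ * c - h₁ * b, by ring_nf; linear_combination hrel⟩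
  have h2 : h₁ ∣ a := hB a (hB (h₂ * a) h1)
  obtain ⟨t, rfl⟩ := h2
  refine ⟨⟨t, rfl⟩, ?_⟩
  have h3 : h₁ * (h₂ ^ 2 * t + h₁ * b - h₂ * c) = 0 := by linear_combination hrel
  have h4 : h₂ ^ 2 * t + h₁ * b - h₂ * c = 0 := hA _ h3
  have h5 : h₁ ∣ h₂ * (c - h₂ * t) := ⟨b, by linear_combination -h4⟩
  obtain ⟨z, hz⟩ := hB _ h5
  have h6 : h₁ * (b - h₂ * z) = 0 := by linear_combination h4 + h₂ * hz
  have := hA _ h6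
  exact ⟨z, by linear_combination this⟩

/-- Let `R` be a Noetherian local ring, `(h₁, h₂)` a regular sequence in `R`, and `M` a
free `R`-module.  If `m₁, m₂, m₃ ∈ M` satisfy `h₂² • m₁ + h₁² • m₂ = h₁h₂ • m₃`, then
`m₁ ∈ h₁ • M` and `m₂ ∈ h₂ • M`. -/
theorem stmt11 {R : Type*} [CommRing R] [IsNoetherianRing R] [IsLocalRing R]
    (h₁ h₂ : R) (hreg : IsRegSeq ![h₁, h₂])
    (M : Type*) [AddCommGroup M] [Module R M] [Module.Free R M]
    (m₁ m₂ m₃ : M) (hrel : h₂ ^ 2 • m₁ + h₁ ^ 2 • m₂ = (h₁ * h₂) • m₃) :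
    (∃ u : M, m₁ = h₁ • u) ∧ (∃ v : M, m₂ = h₂ • v) := by
  -- extract regularity facts
  have hs0 : (![h₁, h₂] '' {j : Fin 2 | j < 0}) = ∅ := by
    ext x; simp [Fin.not_lt_zero]
  have hs1 : (![h₁, h₂] '' {j : Fin 2 | j < 1}) = {h₁} := by
    ext x
    constructor
    · rintro ⟨j, hj, rfl⟩
      have : j = 0 := by simpa [Fin.lt_one_iff] using hj
      simp [this]
    · rintro rfl
      exact ⟨0, by simp, rfl⟩
  have hA : ∀ x : R, h₁ * x = 0 → x = 0 := by
    intro x hx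
    have := hreg.1 0 x (by simp [hs0, hx])
    simpa [hs0] using this
  have hB : ∀ x : R, h₁ ∣ h₂ * x → h₁ ∣ x := by
    intro x hx
    have := hreg.1 1 x (by
      rw [hs1, Ideal.mem_span_singleton]
      simpa using hx)
    rw [hs1, Ideal.mem_span_singleton] at this
    simpa using this
  -- choose a basis
  obtain ⟨ι, b⟩ := Module.Free.exists_basis (R := R) (M := M)
  have hcomp : ∀ i : ι,
      h₂ ^ 2 * b.repr m₁ i + h₁ ^ 2 * b.repr m₂ i = h₁ * h₂ * b.repr m₃ i := by
    intro i
    have := congrArg (fun m => b.repr m i) hrel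
    simpa [map_add, map_smul, smul_eq_mul] using this
  have hdiv : ∀ i : ι, h₁ ∣ b.repr m₁ i ∧ h₂ ∣ b.repr m₂ i :=
    fun i => stmt11_scalar hA hB _ _ _ (hcomp i)
  choose t ht using fun i => (hdiv i).1
  choose s hs using fun i => (hdiv i).2
  constructor
  · refine ⟨(b.repr m₁).sum fun i _ => t i • b i, ?_⟩
    rw [Finsupp.smul_sum]
    conv_lhs => rw [← b.linearCombination_repr m₁, Finsupp.linearCombination_apply]
    refine Finsupp.sum_congr fun i _ => ?_
    rw [smul_smul, ← ht i]
  · refine ⟨(b.repr m₂).sum fun i _ => s i • b i, ?_⟩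
    rw [Finsupp.smul_sum]
    conv_lhs => rw [← b.linearCombination_repr m₂, Finsupp.linearCombination_apply]
    refine Finsupp.sum_congr fun i _ => ?_
    rw [smul_smul, ← hs i]
end

section
/- Let K be a commutative ring, m ≥ 2, and let h₁,…,h_{m−1} be polynomials in K[x₁,…,x_m]. Assume there are weights w₁,…,w_m ∈ K and degrees d₁,…,d_{m−1} ∈ K satisfying the Euler relations: for every ℓ ∈ {1,…,m−1}, Σ_{p=1}^m w_p·x_p·(∂h_ℓ/∂x_p) = d_ℓ·h_ℓ. For i ∈ {1,…,m}, let J_i denote the determinant of the (m−1)×(m−1) matrix obtained from the Jacobian matrix (∂h_ℓ/∂x_p)_{1≤ℓ≤m−1, 1≤p≤m} by deleting the i-th column. Then for all i, j ∈ {1,…,m}, the polynomial (−1)^{i−1}·w_i·x_i·J_j − (−1)^{j−1}·w_j·x_j·J_i belongs to the ideal (h₁,…,h_{m−1}) of K[x₁,…,x_m]. -/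
open MvPolynomial

/-- Let `K` be a commutative ring, `m = n + 1 ≥ 2`, and `h₁, …, h_{m-1}` polynomials in
`K[x₁, …, x_m]` satisfying the Euler relations `Σ_p w_p x_p ∂h_ℓ/∂x_p = d_ℓ h_ℓ` for
weights `w_p ∈ K` and degrees `d_ℓ ∈ K`.  For `i ∈ {1, …, m}`, let `J i` be the
determinant of the `(m-1) × (m-1)` matrix obtained from the Jacobian matrix
`(∂h_ℓ/∂x_p)` by deleting the `i`-th column (the remaining columns being indexed via
`Fin.succAbove`).  Then for all `i, j`, the polynomial
`(-1)^{i-1} w_i x_i J_j - (-1)^{j-1} w_j x_j J_i` belongs to the ideal `(h₁, …, h_{m-1})`.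
(Indices are `0`-based here, so the paper's sign `(-1)^{i-1}` reads `(-1)^{(i : ℕ)}`.) -/
theorem stmt12 {K : Type*} [CommRing K] (n : ℕ) (hn : 1 ≤ n)
    (h : Fin n → MvPolynomial (Fin (n + 1)) K)
    (w : Fin (n + 1) → K) (d : Fin n → K)
    (euler : ∀ ℓ : Fin n,
      ∑ p : Fin (n + 1), C (w p) * X p * pderiv p (h ℓ) = C (d ℓ) * h ℓ)
    (J : Fin (n + 1) → MvPolynomial (Fin (n + 1)) K)
    (hJ : ∀ i : Fin (n + 1),
      J i = Matrix.det (Matrix.of fun ℓ p : Fin n => pderiv (i.succAbove p) (h ℓ)))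
    (i j : Fin (n + 1)) :
    (-1 : MvPolynomial (Fin (n + 1)) K) ^ (i : ℕ) * C (w i) * X i * J j -
        (-1 : MvPolynomial (Fin (n + 1)) K) ^ (j : ℕ) * C (w j) * X j * J i ∈
      Ideal.span (Set.range h) := by
  classical
  let R := MvPolynomial (Fin (n + 1)) K
  let I : Ideal R := Ideal.span (Set.range h)
  let M : Fin (n + 1) → Matrix (Fin (n + 1)) (Fin (n + 1)) R := fun k =>
    Matrix.of (Fin.snoc (fun ℓ p => pderiv p (h ℓ)) (fun p => if p = k then 1 else 0))
  have hMcast : ∀ k (ℓ : Fin n) p, M k (Fin.castSucc ℓ) p = pderiv p (h ℓ) := by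
    intro k ℓ p
    simp [M, Matrix.of_apply, Fin.snoc_castSucc]
  have hMlast : ∀ k p, M k (Fin.last n) p = if p = k then 1 else 0 := by
    intro k p
    simp [M, Matrix.of_apply, Fin.snoc_last]
  have hdet : ∀ k, (M k).det = (-1 : R) ^ ((n : ℕ) + (k : ℕ)) * J k := by
    intro k
    rw [Matrix.det_succ_row (M k) (Fin.last n)]
    rw [Finset.sum_eq_single k]
    · rw [hMlast, if_pos rfl, mul_one, Fin.val_last]
      congr 1
      rw [hJ k]
      congr 1
      ext ℓ p
      simp [Matrix.submatrix_apply, Fin.succAbove_last, hMcast]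
    · intro b _ hb
      rw [hMlast, if_neg hb]
      ring
    · intro hk; exact absurd (Finset.mem_univ k) hk
  let v : Fin (n + 1) → R := fun p => C (w p) * X p
  have hmv : ∀ k, Matrix.mulVec (M k) v =
      Fin.snoc (fun ℓ => C (d ℓ) * h ℓ) (C (w k) * X k) := by
    intro k
    funext ℓ
    refine Fin.lastCases ?_ ?_ ℓ
    · simp only [Matrix.mulVec, dotProduct, Fin.snoc_last]
      rw [Finset.sum_eq_single k]
      · rw [hMlast, if_pos rfl, one_mul]
      · intro b _ hb; rw [hMlast, if_neg hb, zero_mul]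
      · intro hk; exact absurd (Finset.mem_univ k) hk
    · intro ℓ
      simp only [Matrix.mulVec, dotProduct, Fin.snoc_castSucc]
      rw [← euler ℓ]
      apply Finset.sum_congr rfl
      intro p _
      rw [hMcast]
      ring
  have hadj : ∀ k, (M k).adjugate i (Fin.last n) = (M i).det := by
    intro k
    rw [Matrix.adjugate_apply]
    congr 1
    ext ℓ p
    refine Fin.lastCases ?_ ?_ ℓ
    · rw [Matrix.updateRow_self, hMlast, Pi.single_apply]
    · intro ℓ
      rw [Matrix.updateRow_ne (Fin.castSucc_lt_last ℓ).ne, hMcast, hMcast]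
  have key : ∀ k, (M k).det * v i - (M i).det * (C (w k) * X k) ∈ I := by
    intro k
    have h1 : Matrix.mulVec (M k).adjugate (Matrix.mulVec (M k) v) = (M k).det • v := by
      rw [Matrix.mulVec_mulVec, Matrix.adjugate_mul, Matrix.smul_mulVec,
        Matrix.one_mulVec]
    have h2 := congrFun h1 i
    rw [hmv k] at h2
    simp only [Matrix.mulVec, dotProduct, Pi.smul_apply, smul_eq_mul] at h2
    rw [Fin.sum_univ_castSucc] at h2
    simp only [Fin.snoc_castSucc, Fin.snoc_last] at h2
    rw [hadj k] at h2
    have heq : (M k).det * v i - (M i).det * (C (w k) * X k) =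
        ∑ ℓ : Fin n, (M k).adjugate i (Fin.castSucc ℓ) * (C (d ℓ) * h ℓ) := by
      rw [← h2]; ring
    rw [heq]
    refine Ideal.sum_mem _ fun ℓ _ => ?_
    have hh : h ℓ ∈ I := Ideal.subset_span ⟨ℓ, rfl⟩
    have := Ideal.mul_mem_left I ((M k).adjugate i (Fin.castSucc ℓ) * C (d ℓ)) hh
    simpa [mul_assoc] using this
  have S := key j
  have neg_pow : ∀ a b : ℕ, ((-1 : R)) ^ (a + 2 * b) = (-1 : R) ^ a := by
    intro a b
    rw [pow_add, pow_mul, neg_one_sq, one_pow, mul_one]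
  have e1 : (-1 : R) ^ ((n : ℕ) + (i : ℕ) + (j : ℕ)) * (-1 : R) ^ ((n : ℕ) + (j : ℕ)) =
      (-1 : R) ^ (i : ℕ) := by
    rw [← pow_add, show ((n : ℕ) + (i : ℕ) + (j : ℕ)) + ((n : ℕ) + (j : ℕ)) =
      (i : ℕ) + 2 * ((n : ℕ) + (j : ℕ)) by ring, neg_pow]
  have e2 : (-1 : R) ^ ((n : ℕ) + (i : ℕ) + (j : ℕ)) * (-1 : R) ^ ((n : ℕ) + (i : ℕ)) =
      (-1 : R) ^ (j : ℕ) := by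
    rw [← pow_add, show ((n : ℕ) + (i : ℕ) + (j : ℕ)) + ((n : ℕ) + (i : ℕ)) =
      (j : ℕ) + 2 * ((n : ℕ) + (i : ℕ)) by ring, neg_pow]
  have goal_eq : (-1 : R) ^ (i : ℕ) * C (w i) * X i * J j -
      (-1 : R) ^ (j : ℕ) * C (w j) * X j * J i =
      (-1 : R) ^ ((n : ℕ) + (i : ℕ) + (j : ℕ)) *
        ((M j).det * v i - (M i).det * (C (w j) * X j)) := by
    rw [hdet i, hdet j]
    show _ = (-1 : R) ^ ((n : ℕ) + (i : ℕ) + (j : ℕ)) *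
        ((-1 : R) ^ ((n : ℕ) + (j : ℕ)) * J j * (C (w i) * X i) -
          (-1 : R) ^ ((n : ℕ) + (i : ℕ)) * J i * (C (w j) * X j))
    calc (-1 : R) ^ (i : ℕ) * C (w i) * X i * J j -
        (-1 : R) ^ (j : ℕ) * C (w j) * X j * J i
        = ((-1 : R) ^ ((n : ℕ) + (i : ℕ) + (j : ℕ)) * (-1 : R) ^ ((n : ℕ) + (j : ℕ))) *
            C (w i) * X i * J j -
          ((-1 : R) ^ ((n : ℕ) + (i : ℕ) + (j : ℕ)) * (-1 : R) ^ ((n : ℕ) + (i : ℕ))) *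
            C (w j) * X j * J i := by rw [e1, e2]
      _ = _ := by ring
  show _ ∈ I
  rw [goal_eq]
  exact Ideal.mul_mem_left I _ S
end

section
/- Let R be a Noetherian local ring, (h₁,…,h_k) a regular sequence in R, and δ : R → R a derivation (an additive map satisfying the Leibniz rule δ(ab) = a·δ(b) + b·δ(a)). If δ(h₁·h₂⋯h_k) belongs to the principal ideal (h₁·h₂⋯h_k), then for every i ∈ {1,…,k}, δ(h_i) belongs to the principal ideal (h_i); in particular δ maps the ideal (h₁,…,h_k) into itself. -/
section Aux

variable {R : Type*} [CommRing R] [IsNoetherianRing R] [IsLocalRing R]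

/-- Swap lemma (Nakayama part): if `x` is a nonunit, `x` is nzd mod `I`, and `y` is nzd
mod `I ⊔ (x)`, then `y` is nzd mod `I`. -/
lemma swapSL (I : Ideal R) (x y : R) (hx : x ∈ IsLocalRing.maximalIdeal R)
    (hxreg : ∀ a, x * a ∈ I → a ∈ I)
    (hyreg : ∀ a, y * a ∈ I ⊔ Ideal.span {x} → a ∈ I ⊔ Ideal.span {x}) :
    ∀ a, y * a ∈ I → a ∈ I := by
  set N : Submodule R (R ⧸ I) := LinearMap.ker (LinearMap.lsmul R (R ⧸ I) y) with hN
  have key : ∀ a : R, y * a ∈ I → Ideal.Quotient.mk I a ∈ N := by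
    intro a ha
    simp only [hN, LinearMap.mem_ker, LinearMap.lsmul_apply]
    have : y • Ideal.Quotient.mk I a = Ideal.Quotient.mk I (y * a) := rfl
    rw [this]
    exact (Ideal.Quotient.eq_zero_iff_mem).2 ha
  have hsub : N ≤ (Ideal.span {x}) • N := by
    intro z hz
    obtain ⟨a, rfl⟩ := Ideal.Quotient.mk_surjective z
    have hya : y * a ∈ I := by
      have := hz
      simp only [hN, LinearMap.mem_ker, LinearMap.lsmul_apply] at this
      have h2 : y • Ideal.Quotient.mk I a = Ideal.Quotient.mk I (y * a) := rfl
      rw [h2] at this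
      exact (Ideal.Quotient.eq_zero_iff_mem).1 this
    have hmem : a ∈ I ⊔ Ideal.span {x} := hyreg a (Ideal.mem_sup_left hya)
    obtain ⟨c, hc, d, hd, hacd⟩ := Submodule.mem_sup.1 hmem
    obtain ⟨b, rfl⟩ := Ideal.mem_span_singleton'.1 hd
    have hyb : y * b ∈ I := by
      apply hxreg
      have : x * (y * b) = y * a - y * c := by ring_nf; rw [← hacd]; ring
      rw [this]
      exact I.sub_mem hya (I.mul_mem_left y hc)
    have hbN : Ideal.Quotient.mk I b ∈ N := key b hyb
    have : Ideal.Quotient.mk I a = x • Ideal.Quotient.mk I b := by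
      have h3 : x • Ideal.Quotient.mk I b = Ideal.Quotient.mk I (x * b) := rfl
      rw [← hacd, map_add, (Ideal.Quotient.eq_zero_iff_mem).2 hc, zero_add, h3,
        mul_comm]
    rw [this]
    exact Submodule.smul_mem_smul (Ideal.mem_span_singleton_self x) hbN
  have hNbot : N = ⊥ := by
    apply Submodule.eq_bot_of_le_smul_of_le_jacobson_bot (Ideal.span {x}) N
      (IsNoetherian.noetherian N) hsub
    rw [IsLocalRing.jacobson_eq_maximalIdeal (⊥ : Ideal R) bot_ne_top]
    exact (Ideal.span_le).2 (Set.singleton_subset_iff.2 hx)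
  intro a ha
  have := key a ha
  rw [hNbot, Submodule.mem_bot] at this
  exact (Ideal.Quotient.eq_zero_iff_mem).1 this

/-- Second swap lemma (no Nakayama): if `x` is nzd mod `I` and `y` is nzd mod `I ⊔ (x)`,
then `x` is nzd mod `I ⊔ (y)`. -/
lemma swapSW2 (I : Ideal R) (x y : R)
    (hxreg : ∀ a, x * a ∈ I → a ∈ I)
    (hyreg : ∀ a, y * a ∈ I ⊔ Ideal.span {x} → a ∈ I ⊔ Ideal.span {x}) :
    ∀ a, x * a ∈ I ⊔ Ideal.span {y} → a ∈ I ⊔ Ideal.span {y} := by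
  intro a ha
  obtain ⟨c, hc, d, hd, hacd⟩ := Submodule.mem_sup.1 ha
  obtain ⟨b, rfl⟩ := Ideal.mem_span_singleton'.1 hd
  have hb : b ∈ I ⊔ Ideal.span {x} := by
    apply hyreg
    have hyb : y * b = -c + x * a := by linear_combination hacd
    rw [hyb]
    exact Submodule.mem_sup.2 ⟨-c, I.neg_mem hc, x * a,
      Ideal.mem_span_singleton'.2 ⟨a, by ring⟩, rfl⟩
  obtain ⟨c', hc', e, he, hbe⟩ := Submodule.mem_sup.1 hb
  obtain ⟨b', rfl⟩ := Ideal.mem_span_singleton'.1 he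
  have hkey : x * (a - y * b') ∈ I := by
    have heq : x * (a - y * b') = c + y * c' := by linear_combination -hacd - y * hbe
    rw [heq]
    exact I.add_mem hc (I.mul_mem_left y hc')
  have ha' : a = (a - y * b') + y * b' := by ring
  rw [ha']
  exact Submodule.add_mem _ (Ideal.mem_sup_left (hxreg _ hkey))
    (Ideal.mem_sup_right (Ideal.mem_span_singleton'.2 ⟨b', by ring⟩))

/-- Main lemma: for a regular sequence `h`, any `h m` is a non zero divisor modulo the
ideal generated by any subfamily not containing `m`. -/
lemma regMain {k : ℕ} (h : Fin k → R)
    (hr : ∀ i : Fin k, ∀ a : R,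
      h i * a ∈ Ideal.span (h '' {j : Fin k | j < i}) →
        a ∈ Ideal.span (h '' {j : Fin k | j < i}))
    (hmax : ∀ j, h j ∈ IsLocalRing.maximalIdeal R) :
    ∀ (n : ℕ) (T : Finset (Fin k)) (m : Fin k), m ∉ T →
      2 * ((insert m T).sup (fun j => (j : ℕ))) + (if T ⊆ Finset.Iio m then 0 else 1) ≤ n →
      ∀ a, h m * a ∈ Ideal.span (h '' ↑T) → a ∈ Ideal.span (h '' ↑T) := by
  intro n
  induction n using Nat.strong_induction_on with
  | _ n IH =>
  intro T m hmT hμ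
  by_cases hTm : T ⊆ Finset.Iio m
  · -- Case A : all elements of `T` are below `m`.
    have hifzero : (if T ⊆ Finset.Iio m then 0 else 1) = 0 := if_pos hTm
    have hsupm : (m : ℕ) ≤ (insert m T).sup (fun j => (j : ℕ)) :=
      Finset.le_sup (Finset.mem_insert_self m T)
    have inner : ∀ (d : ℕ) (U : Finset (Fin k)), U ⊆ Finset.Iio m →
        (Finset.Iio m \ U).card ≤ d →
        ∀ a, h m * a ∈ Ideal.span (h '' ↑U) → a ∈ Ideal.span (h '' ↑U) := by
      intro d
      induction d with
      | zero =>
        intro U hU hcard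
        have hUeq : U = Finset.Iio m := by
          have : Finset.Iio m \ U = ∅ := Finset.card_eq_zero.1 (Nat.le_zero.1 hcard)
          exact Finset.Subset.antisymm hU (Finset.sdiff_eq_empty_iff_subset.1 this)
        subst hUeq
        have himg : (h '' ↑(Finset.Iio m)) = h '' {j : Fin k | j < m} := by
          rw [Finset.coe_Iio]; rfl
        rw [himg]
        exact hr m
      | succ d ihd =>
        intro U hU hcard
        by_cases hfull : Finset.Iio m ⊆ U
        · have hUeq : U = Finset.Iio m := Finset.Subset.antisymm hU hfull
          subst hUeq
          have himg : (h '' ↑(Finset.Iio m)) = h '' {j : Fin k | j < m} := by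
            rw [Finset.coe_Iio]; rfl
          rw [himg]
          exact hr m
        · obtain ⟨u, hu⟩ := Finset.nonempty_iff_ne_empty.2
            (fun hemp => hfull (Finset.sdiff_eq_empty_iff_subset.1 hemp))
          have hu1 : u ∈ Finset.Iio m := (Finset.mem_sdiff.1 hu).1
          have hu2 : u ∉ U := (Finset.mem_sdiff.1 hu).2
          have hulm : u < m := Finset.mem_Iio.1 hu1
          have hU' : insert u U ⊆ Finset.Iio m := Finset.insert_subset hu1 hU
          have hcard' : (Finset.Iio m \ insert u U).card ≤ d := by
            rw [Finset.sdiff_insert]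
            have h1 := Finset.card_erase_of_mem hu
            have h2 : 1 ≤ (Finset.Iio m \ U).card := Finset.card_pos.2 ⟨u, hu⟩
            omega
          -- `h u` is a nzd mod `J U`, by the outer induction hypothesis.
          have hmu : ∀ a, h u * a ∈ Ideal.span (h '' ↑U) → a ∈ Ideal.span (h '' ↑U) := by
            have hsupU : (insert u U).sup (fun j => (j : ℕ)) + 1 ≤ (m : ℕ) := by
              have : ∀ j ∈ insert u U, (j : ℕ) + 1 ≤ (m : ℕ) := by
                intro j hj
                exact Nat.succ_le_of_lt (Fin.lt_def.1 (Finset.mem_Iio.1 (hU' hj)))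
              have hne : (insert u U).Nonempty := ⟨u, Finset.mem_insert_self u U⟩
              obtain ⟨j0, hj0, hj0e⟩ := Finset.exists_mem_eq_sup (insert u U) hne
                (fun j => (j : ℕ))
              rw [hj0e]
              exact this j0 hj0
            set n' := 2 * ((insert u U).sup (fun j => (j : ℕ))) +
              (if U ⊆ Finset.Iio u then 0 else 1) with hn'
            have hlt : n' < n := by
              have hif : (if U ⊆ Finset.Iio u then 0 else 1) ≤ 1 := by
                split <;> omega
              omega
            exact IH n' hlt U u hu2 le_rfl
          -- `h m` is a nzd mod `J (insert u U)` by the inner induction hypothesis.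
          have hstep := ihd (insert u U) hU' hcard'
          have hspan : Ideal.span (h '' ↑(insert u U)) =
              Ideal.span (h '' ↑U) ⊔ Ideal.span {h u} := by
            rw [Finset.coe_insert, Set.image_insert_eq, Ideal.span_insert, sup_comm]
          refine swapSL (Ideal.span (h '' ↑U)) (h u) (h m) (hmax u) hmu ?_
          intro a ha
          rw [← hspan]
          exact hstep a (hspan ▸ ha)
    exact inner (Finset.Iio m \ T).card T hTm le_rfl
  · -- Case B : some element of `T` is above `m`.
    have hTne : T.Nonempty := by
      rcases Finset.eq_empty_or_nonempty T with rfl | hne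
      · exact absurd (Finset.empty_subset _) hTm
      · exact hne
    set N := T.max' hTne with hNdef
    have hNT : N ∈ T := T.max'_mem hTne
    have hle : ∀ t ∈ T, t ≤ N := fun t ht => T.le_max' t ht
    have hmN : m < N := by
      obtain ⟨t, ht, htm⟩ := Finset.not_subset.1 hTm
      have h1 : ¬ t < m := fun hc => htm (Finset.mem_Iio.2 hc)
      have h2 : t ≠ m := fun hc => hmT (hc ▸ ht)
      have h3 : m < t := lt_of_le_of_ne (le_of_not_gt h1) (Ne.symm h2)
      exact lt_of_lt_of_le h3 (hle t ht)
    set T' := T.erase N with hT'def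
    have hT'lt : ∀ j ∈ T', j < N := by
      intro j hj
      exact lt_of_le_of_ne (hle j (Finset.mem_of_mem_erase hj)) (Finset.ne_of_mem_erase hj)
    have hifone : (if T ⊆ Finset.Iio m then 0 else 1) = 1 := if_neg hTm
    have hsupN : (N : ℕ) ≤ (insert m T).sup (fun j => (j : ℕ)) :=
      Finset.le_sup (Finset.mem_insert_of_mem hNT)
    -- `h m` is nzd mod `J T'`.
    have hcall1 : ∀ a, h m * a ∈ Ideal.span (h '' ↑T') → a ∈ Ideal.span (h '' ↑T') := by
      have hsup' : (insert m T').sup (fun j => (j : ℕ)) + 1 ≤ (N : ℕ) := by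
        have hbd : ∀ j ∈ insert m T', (j : ℕ) + 1 ≤ (N : ℕ) := by
          intro j hj
          rcases Finset.mem_insert.1 hj with rfl | hj'
          · exact Nat.succ_le_of_lt hmN
          · exact Nat.succ_le_of_lt (hT'lt j hj')
        have hne : (insert m T').Nonempty := ⟨m, Finset.mem_insert_self m T'⟩
        obtain ⟨j0, hj0, hj0e⟩ := Finset.exists_mem_eq_sup (insert m T') hne
          (fun j => (j : ℕ))
        rw [hj0e]
        exact hbd j0 hj0
      set n' := 2 * ((insert m T').sup (fun j => (j : ℕ))) +
        (if T' ⊆ Finset.Iio m then 0 else 1) with hn'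
      have hlt : n' < n := by
        have hif : (if T' ⊆ Finset.Iio m then 0 else 1) ≤ 1 := by split <;> omega
        omega
      have hmT' : m ∉ T' := fun hc => hmT (Finset.mem_of_mem_erase hc)
      exact IH n' hlt T' m hmT' le_rfl
    -- `h N` is nzd mod `J (insert m T')`.
    have hcall2 : ∀ a, h N * a ∈ Ideal.span (h '' ↑(insert m T')) →
        a ∈ Ideal.span (h '' ↑(insert m T')) := by
      have hNmem : N ∉ insert m T' := by
        intro hc
        rcases Finset.mem_insert.1 hc with hc' | hc'
        · exact absurd hc' (ne_of_gt hmN)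
        · exact (Finset.notMem_erase N T) hc'
      have hsub : insert m T' ⊆ Finset.Iio N := by
        intro j hj
        rcases Finset.mem_insert.1 hj with rfl | hj'
        · exact Finset.mem_Iio.2 hmN
        · exact Finset.mem_Iio.2 (hT'lt j hj')
      have hsup2 : (insert N (insert m T')).sup (fun j => (j : ℕ)) ≤ (N : ℕ) := by
        apply Finset.sup_le
        intro j hj
        rcases Finset.mem_insert.1 hj with rfl | hj'
        · exact le_rfl
        · exact le_of_lt (Fin.lt_def.1 (Finset.mem_Iio.1 (hsub hj')))
      set n' := 2 * ((insert N (insert m T')).sup (fun j => (j : ℕ))) +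
        (if insert m T' ⊆ Finset.Iio N then 0 else 1) with hn'
      have hlt : n' < n := by
        have hif : (if insert m T' ⊆ Finset.Iio N then 0 else 1) = 0 := if_pos hsub
        omega
      exact IH n' hlt (insert m T') N hNmem le_rfl
    -- Apply the second swap lemma.
    have hspanm : Ideal.span (h '' ↑(insert m T')) =
        Ideal.span (h '' ↑T') ⊔ Ideal.span {h m} := by
      rw [Finset.coe_insert, Set.image_insert_eq, Ideal.span_insert, sup_comm]
    have hspanN : Ideal.span (h '' ↑T') ⊔ Ideal.span {h N} = Ideal.span (h '' ↑T) := by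
      rw [← sup_comm, ← Ideal.span_insert, ← Set.image_insert_eq, ← Finset.coe_insert,
        Finset.insert_erase hNT]
    have hsw := swapSW2 (Ideal.span (h '' ↑T')) (h m) (h N) hcall1
      (fun a ha => by rw [← hspanm]; exact hcall2 a (hspanm ▸ ha))
    intro a ha
    rw [← hspanN]
    exact hsw a (by rw [hspanN]; exact ha)


end Aux

/-- Let `R` be a Noetherian local ring, `(h₁, …, h_k)` a regular sequence in `R`, and
`δ : R → R` a derivation (an additive map satisfying the Leibniz rule).  If
`δ(h₁ ⋯ h_k)` belongs to the principal ideal `(h₁ ⋯ h_k)`, then for every `i`,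
`δ(h_i)` belongs to the principal ideal `(h_i)`; in particular `δ` maps the ideal
`(h₁, …, h_k)` into itself. -/
theorem stmt13 {R : Type*} [CommRing R] [IsNoetherianRing R] [IsLocalRing R]
    {k : ℕ} (h : Fin k → R) (hreg : IsRegSeq h)
    (δ : R → R)
    (hadd : ∀ a b : R, δ (a + b) = δ a + δ b)
    (hleibniz : ∀ a b : R, δ (a * b) = a * δ b + b * δ a)
    (hprod : δ (∏ i, h i) ∈ Ideal.span {∏ i, h i}) :
    (∀ i, δ (h i) ∈ Ideal.span {h i}) ∧
      ∀ x ∈ Ideal.span (Set.range h), δ x ∈ Ideal.span (Set.range h) := by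
  obtain ⟨hr, hproper⟩ := hreg
  have hmax : ∀ j, h j ∈ IsLocalRing.maximalIdeal R := by
    intro j
    rw [IsLocalRing.mem_maximalIdeal, mem_nonunits_iff]
    intro hunit
    exact hproper (Ideal.eq_top_of_isUnit_mem _ (Ideal.subset_span ⟨j, rfl⟩) hunit)
  have hnzd : ∀ (m i : Fin k), m ≠ i →
      ∀ a, h m * a ∈ Ideal.span {h i} → a ∈ Ideal.span {h i} := by
    intro m i hne a ha
    have himg : (h '' ↑({i} : Finset (Fin k))) = {h i} := by simp
    have hmi : m ∉ ({i} : Finset (Fin k)) := by simpa using hne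
    have := regMain h hr hmax
      (2 * ((insert m ({i} : Finset (Fin k))).sup (fun j => (j : ℕ))) + 1)
      ({i} : Finset (Fin k)) m hmi
      (by have : (if ({i} : Finset (Fin k)) ⊆ Finset.Iio m then 0 else 1) ≤ 1 := by
            split <;> omega
          omega)
      a (by rw [himg]; exact ha)
    rw [himg] at this
    exact this
  have part1 : ∀ i, δ (h i) ∈ Ideal.span {h i} := by
    intro i
    have hpe : ∏ j, h j = h i * ∏ j ∈ Finset.univ.erase i, h j :=
      (Finset.mul_prod_erase _ _ (Finset.mem_univ i)).symm
    set p := ∏ j ∈ Finset.univ.erase i, h j with hp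
    have h1 : δ (∏ j, h j) = h i * δ p + p * δ (h i) := by rw [hpe]; exact hleibniz _ _
    have h2 : p * δ (h i) = δ (∏ j, h j) - h i * δ p := by rw [h1]; ring
    have hprodmem : (∏ j, h j) ∈ Ideal.span {h i} := by
      rw [hpe]
      exact Ideal.mul_mem_right _ _ (Ideal.mem_span_singleton_self _)
    have hmem : p * δ (h i) ∈ Ideal.span {h i} := by
      rw [h2]
      apply Ideal.sub_mem
      · exact Ideal.span_le.2 (Set.singleton_subset_iff.2 hprodmem) hprod
      · exact Ideal.mul_mem_right _ _ (Ideal.mem_span_singleton_self _)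
    have hpnzd : ∀ a, p * a ∈ Ideal.span {h i} → a ∈ Ideal.span {h i} := by
      rw [hp]
      refine Finset.prod_induction (fun j => h j)
        (fun x => ∀ a, x * a ∈ Ideal.span {h i} → a ∈ Ideal.span {h i}) ?_ ?_ ?_
      · intro f g hf hg a ha
        rw [mul_assoc] at ha
        exact hg a (hf _ ha)
      · intro a ha
        rwa [one_mul] at ha
      · intro j hj
        exact hnzd j i (Finset.ne_of_mem_erase hj)
    exact hpnzd _ hmem
  refine ⟨part1, ?_⟩
  have hδ0 : δ 0 = 0 := by
    have h0 := hadd 0 0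
    rw [add_zero] at h0
    have h0' : δ 0 + δ 0 = δ 0 + 0 := by rw [← h0, add_zero]
    exact add_left_cancel h0'
  intro x hx
  induction hx using Submodule.span_induction with
  | mem s hs =>
    obtain ⟨i, rfl⟩ := hs
    exact Ideal.span_mono (Set.singleton_subset_iff.2 (Set.mem_range_self i)) (part1 i)
  | zero => rw [hδ0]; exact Ideal.zero_mem _
  | add a b ha hb iha ihb => rw [hadd]; exact Ideal.add_mem _ iha ihb
  | smul r a ha iha =>
    rw [smul_eq_mul, hleibniz]
    exact Ideal.add_mem _ (Ideal.mul_mem_left _ r iha)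
      (Ideal.mul_mem_right _ _ ha)
end
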